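/- For every forest F with p vertices and q ≥ 2 edges and every k ∈ ℕ, there exists a forest F' with at most (p·q²)^{q+1} edges that is a (p-1)-blow-up of F in the unordered sense: for every edge coloring of F' using each color at most p-1 times, F' contains a copy of F with all edges of distinct colors. -/

import Mathlib

namespace Aux13

def TW (D n : ℕ) : Type := {l : List (Fin D) // l.length ≤ n}

def tg (D n : ℕ) : TW D n → (Fin n → Fin (D+1)) :=
  fun v i => if h : i.1 < v.1.length then (v.1.get ⟨i.1, h⟩).castSucc else Fin.last D

lemma tg_len_le {D n : ℕ} (u v : TW D n) (h : tg D n u = tg D n v) :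
    u.1.length ≤ v.1.length := by
  by_contra hlt
  push_neg at hlt
  have hi : v.1.length < n := lt_of_lt_of_le hlt u.2
  have := congrFun h ⟨v.1.length, hi⟩
  simp only [tg] at this
  rw [dif_pos hlt, dif_neg (lt_irrefl _)] at this
  exact absurd this (Fin.castSucc_lt_last _).ne

lemma tg_inj (D n : ℕ) : Function.Injective (tg D n) := by
  intro u v h
  have hlen : u.1.length = v.1.length := le_antisymm (tg_len_le u v h) (tg_len_le v u h.symm)
  apply Subtype.ext
  apply List.ext_get hlen
  intro i hi1 hi2
  have hin : i < n := lt_of_lt_of_le hi1 u.2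
  have := congrFun h ⟨i, hin⟩
  simp only [tg] at this
  rw [dif_pos hi1, dif_pos hi2] at this
  exact Fin.castSucc_injective _ this

noncomputable instance (D n : ℕ) : Fintype (TW D n) :=
  Fintype.ofInjective (tg D n) (tg_inj D n)

lemma card_TW_le (D n : ℕ) : Fintype.card (TW D n) ≤ (D+1)^n := by
  have := Fintype.card_le_of_injective _ (tg_inj D n)
  simpa using this

/-- transfer acyclicity along a graph isomorphism -/
lemma isAcyclic_of_iso {α β : Type*} {G : SimpleGraph α} {H : SimpleGraph β}
    (f : G ≃g H) (h : H.IsAcyclic) : G.IsAcyclic := by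
  intro v c hc
  exact h (c.map f.toHom) (hc.map f.toEquiv.injective)

/-- The complete D-ary tree graph of depth n. -/
def TG (D n : ℕ) : SimpleGraph (TW D n) :=
  SimpleGraph.fromRel (fun u v => ∃ a : Fin D, v.1 = a :: u.1)

lemma TG_adj {D n : ℕ} {u v : TW D n} :
    (TG D n).Adj u v ↔ u ≠ v ∧ ((∃ a : Fin D, v.1 = a :: u.1) ∨ (∃ a : Fin D, u.1 = a :: v.1)) := by
  simp [TG, SimpleGraph.fromRel_adj]

lemma TG_adj_of_cons {D n : ℕ} {u v : TW D n} (a : Fin D) (h : v.1 = a :: u.1) :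
    (TG D n).Adj u v := by
  refine TG_adj.2 ⟨?_, Or.inl ⟨a, h⟩⟩
  intro he
  rw [he] at h
  exact List.cons_ne_self a v.1 h.symm

/-- the invariant: crossing an edge other than s(u,v) preserves "v.1 is a suffix". -/
lemma TG_step {D n : ℕ} {u v y z : TW D n} (a : Fin D) (hv : v.1 = a :: u.1)
    (b : Fin D) (hz : z.1 = b :: y.1) (hne : s(y, z) ≠ s(u, v)) :
    (v.1 <:+ y.1 ↔ v.1 <:+ z.1) := by
  constructor
  · intro h
    exact h.trans (hz ▸ List.suffix_cons b y.1)
  · intro h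
    rw [hz, List.suffix_cons_iff] at h
    rcases h with h | h
    · exfalso
      apply hne
      have hyu : y = u := by
        apply Subtype.ext
        have : a :: u.1 = b :: y.1 := by rw [← hv, h]
        exact (List.cons.injEq .. ▸ this).2.symm
      have hzv : z = v := by
        apply Subtype.ext; rw [hz, ← h]
      rw [hyu, hzv]
    · exact h

lemma TG_walk_pres {D n : ℕ} {u v : TW D n} (a : Fin D) (hv : v.1 = a :: u.1) :
    ∀ {y z : TW D n} (w : (TG D n).Walk y z), s(u, v) ∉ w.edges →
      ((v.1 <:+ y.1) ↔ (v.1 <:+ z.1)) := by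
  intro y z w
  induction w with
  | nil => intro _; rfl
  | cons h w ih =>
    rename_i m' z'
    intro hmem
    rw [SimpleGraph.Walk.edges_cons, List.mem_cons] at hmem
    push_neg at hmem
    obtain ⟨hne, hmem⟩ := hmem
    refine Iff.trans ?_ (ih hmem)
    rcases (TG_adj.1 h).2 with ⟨b, hb⟩ | ⟨b, hb⟩
    · exact TG_step a hv b hb (Ne.symm hne)
    · exact (TG_step a hv b hb (by rw [Sym2.eq_swap]; exact Ne.symm hne)).symm

lemma TG_isAcyclic (D n : ℕ) : (TG D n).IsAcyclic := by
  rw [SimpleGraph.isAcyclic_iff_forall_edge_isBridge]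
  intro e
  induction e with
  | _ x y =>
    intro he
    rw [SimpleGraph.mem_edgeSet] at he
    rw [SimpleGraph.isBridge_iff_adj_and_forall_walk_mem_edges]
    intro w
    by_contra hmem
    rcases (TG_adj.1 he).2 with ⟨b, hb⟩ | ⟨b, hb⟩
    · -- y = b :: x
      have := (TG_walk_pres b hb w hmem).2 (List.suffix_refl _)
      have hlen := this.length_le
      rw [hb] at hlen
      simp at hlen
    · -- x = b :: y
      have := (TG_walk_pres b hb (u := y) (v := x) w.reverse (by
        rw [SimpleGraph.Walk.edges_reverse, List.mem_reverse]
        rwa [Sym2.eq_swap])).2 (List.suffix_refl _)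
      have hlen := this.length_le
      rw [hb] at hlen
      simp at hlen


lemma TG_edge_ncard_le (D n : ℕ) :
    (TG D n).edgeSet.ncard ≤ Fintype.card (TW D n) := by
  classical
  have hsub : (TG D n).edgeSet ⊆
      (fun v : TW D n => s((⟨v.1.tail, v.1.length_tail ▸ le_trans (Nat.sub_le _ _) v.2⟩ : TW D n), v)) '' Set.univ := by
    intro e he
    induction e with
    | _ x y =>
      rw [SimpleGraph.mem_edgeSet] at he
      rcases (TG_adj.1 he).2 with ⟨b, hb⟩ | ⟨b, hb⟩
      · refine ⟨y, Set.mem_univ _, ?_⟩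
        dsimp only
        have hx : (⟨y.1.tail, y.1.length_tail ▸ le_trans (Nat.sub_le _ _) y.2⟩ : TW D n) = x :=
          Subtype.ext (by show _root_.List.tail _ = _; rw [hb, List.tail_cons])
        rw [hx, Sym2.eq_swap]
      · refine ⟨x, Set.mem_univ _, ?_⟩
        dsimp only
        have hy : (⟨x.1.tail, x.1.length_tail ▸ le_trans (Nat.sub_le _ _) x.2⟩ : TW D n) = y :=
          Subtype.ext (by show _root_.List.tail _ = _; rw [hb, List.tail_cons])
        rw [hy, Sym2.eq_swap]
  calc (TG D n).edgeSet.ncard ≤ _ := Set.ncard_le_ncard hsub (Set.Finite.image _ (Set.finite_univ))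
    _ ≤ Set.univ.ncard := Set.ncard_image_le Set.finite_univ
    _ = Fintype.card (TW D n) := by rw [Set.ncard_univ, Nat.card_eq_fintype_card]

variable {V : Type*} (F : SimpleGraph V)
open scoped Classical

noncomputable def froot (v : V) : V := (F.connectedComponentMk v).out

noncomputable def frank (v : V) : ℕ := F.dist (froot F v) v

lemma froot_reachable (v : V) : F.Reachable (froot F v) v := by
  have : F.connectedComponentMk (froot F v) = F.connectedComponentMk v := by
    exact Quot.out_eq (F.connectedComponentMk v)
  exact (SimpleGraph.ConnectedComponent.eq).1 this

lemma froot_eq_of_adj {u v : V} (h : F.Adj u v) : froot F u = froot F v := by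
  unfold froot
  rw [SimpleGraph.ConnectedComponent.connectedComponentMk_eq_of_adj h]

lemma frank_eq_zero_iff {v : V} : frank F v = 0 ↔ froot F v = v := by
  rw [frank, SimpleGraph.dist_eq_zero_iff_eq_or_not_reachable]
  constructor
  · rintro (h | h)
    · exact h
    · exact absurd (froot_reachable F v) h
  · exact Or.inl

/-- there is a path from froot v to v of length exactly frank v -/
lemma exists_path_frank (v : V) : ∃ p : F.Walk (froot F v) v, p.IsPath ∧ p.length = frank F v := by
  obtain ⟨w, hw⟩ := (froot_reachable F v).exists_walk_length_eq_dist
  refine ⟨w.bypass, w.bypass_isPath, le_antisymm ?_ ?_⟩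
  · exact le_trans w.length_bypass_le (le_of_eq hw)
  · exact SimpleGraph.dist_le _

/-- a path's length is at most the number of edges -/
lemma path_length_le_ncard {u v : V} (p : F.Walk u v) (hp : p.IsPath) (hfin : F.edgeSet.Finite) :
    p.length ≤ F.edgeSet.ncard := by
  classical
  rw [← SimpleGraph.Walk.length_edges]
  have hnd : p.edges.Nodup := hp.isTrail.edges_nodup
  have hsub : ∀ e ∈ p.edges.toFinset, e ∈ hfin.toFinset := by
    intro e he
    rw [List.mem_toFinset] at he
    rw [Set.Finite.mem_toFinset]
    exact p.edges_subset_edgeSet he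
  calc p.edges.length = p.edges.toFinset.card := (List.toFinset_card_of_nodup hnd).symm
    _ ≤ hfin.toFinset.card := Finset.card_le_card hsub
    _ = F.edgeSet.ncard := (Set.ncard_eq_toFinset_card _ hfin).symm

lemma frank_le (v : V) (hfin : F.edgeSet.Finite) : frank F v ≤ F.edgeSet.ncard := by
  obtain ⟨p, hp, hlen⟩ := exists_path_frank F v
  exact hlen ▸ path_length_le_ncard F p hp hfin

lemma isPath_concat {x u v : V} {P : F.Walk x u} (hP : P.IsPath) (h : F.Adj u v)
    (hv : v ∉ P.support) : (P.concat h).IsPath := by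
  rw [← SimpleGraph.Walk.reverse_reverse (P.concat h), SimpleGraph.Walk.reverse_concat]
  apply SimpleGraph.Walk.IsPath.reverse
  rw [SimpleGraph.Walk.cons_isPath_iff]
  exact ⟨hP.reverse, by rwa [SimpleGraph.Walk.support_reverse, List.mem_reverse]⟩

lemma notmem_support {x u v : V} (P : F.Walk x u) (hne : v ≠ u)
    (hlen : P.length ≤ F.dist x v) : v ∉ P.support := by
  intro hv
  have h1 : F.dist x v ≤ (P.takeUntil v hv).length := SimpleGraph.dist_le _
  have h2 := congrArg SimpleGraph.Walk.length (P.take_spec hv)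
  rw [SimpleGraph.Walk.length_append] at h2
  have h3 : (P.dropUntil v hv).length = 0 := by omega
  exact hne (SimpleGraph.Walk.eq_of_length_eq_zero h3)

lemma frank_adj (hF : F.IsAcyclic) {u v : V} (h : F.Adj u v) :
    frank F u + 1 = frank F v ∨ frank F v + 1 = frank F u := by
  have hroot : froot F u = froot F v := froot_eq_of_adj F h
  obtain ⟨P, hP, hPl⟩ := exists_path_frank F u
  obtain ⟨Q, hQ, hQl⟩ := exists_path_frank F v
  have hle1 : frank F v ≤ frank F u + 1 := by
    have := SimpleGraph.dist_le ((P.concat h).copy hroot rfl)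
    rwa [SimpleGraph.Walk.length_copy, SimpleGraph.Walk.length_concat, hPl] at this
  have hle2 : frank F u ≤ frank F v + 1 := by
    have := SimpleGraph.dist_le ((Q.concat h.symm).copy hroot.symm rfl)
    rwa [SimpleGraph.Walk.length_copy, SimpleGraph.Walk.length_concat, hQl] at this
  have hne : frank F u ≠ frank F v := by
    intro heq
    by_cases h0 : frank F u = 0
    · have h0' : frank F v = 0 := heq ▸ h0
      have e1 : froot F u = u := (frank_eq_zero_iff F).1 h0
      have e2 : froot F v = v := (frank_eq_zero_iff F).1 h0'
      exact h.ne (by rw [← e1, hroot, e2])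
    · have hvP : v ∉ P.support := by
        apply notmem_support F P h.ne'
        rw [hPl, heq]
        unfold frank
        rw [← hroot]
      have hconc : ((P.concat h).copy hroot rfl).IsPath := by
        rw [SimpleGraph.Walk.isPath_copy]
        exact isPath_concat F hP h hvP
      have := SimpleGraph.isAcyclic_iff_path_unique.1 hF ⟨_, hconc⟩ ⟨Q, hQ⟩
      have hl := congrArg (fun (p : F.Path _ _) => p.1.length) this
      simp only [SimpleGraph.Walk.length_copy, SimpleGraph.Walk.length_concat] at hl
      rw [hPl, hQl] at hl
      omega
  omega

lemma frank_parent_unique (hF : F.IsAcyclic) {u₁ u₂ v : V} (h₁ : F.Adj u₁ v) (h₂ : F.Adj u₂ v)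
    (hr₁ : frank F u₁ < frank F v) (hr₂ : frank F u₂ < frank F v) : u₁ = u₂ := by
  have hroot₁ : froot F u₁ = froot F v := froot_eq_of_adj F h₁
  have hroot₂ : froot F u₂ = froot F v := froot_eq_of_adj F h₂
  obtain ⟨P₁, hP₁, hPl₁⟩ := exists_path_frank F u₁
  obtain ⟨P₂, hP₂, hPl₂⟩ := exists_path_frank F u₂
  have hv₁ : v ∉ P₁.support := by
    apply notmem_support F P₁ h₁.ne'
    rw [hPl₁]
    have : F.dist (froot F u₁) v = frank F v := by unfold frank; rw [← hroot₁]
    omega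
  have hv₂ : v ∉ P₂.support := by
    apply notmem_support F P₂ h₂.ne'
    rw [hPl₂]
    have : F.dist (froot F u₂) v = frank F v := by unfold frank; rw [← hroot₂]
    omega
  have hc₁ : ((P₁.concat h₁).copy hroot₁ rfl).IsPath := by
    rw [SimpleGraph.Walk.isPath_copy]; exact isPath_concat F hP₁ h₁ hv₁
  have hc₂ : ((P₂.concat h₂).copy hroot₂ rfl).IsPath := by
    rw [SimpleGraph.Walk.isPath_copy]; exact isPath_concat F hP₂ h₂ hv₂
  have heq := SimpleGraph.isAcyclic_iff_path_unique.1 hF ⟨_, hc₁⟩ ⟨_, hc₂⟩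
  have heq' : ((P₁.concat h₁).copy hroot₁ rfl) = ((P₂.concat h₂).copy hroot₂ rfl) :=
    congrArg Subtype.val heq
  have hrev := congrArg SimpleGraph.Walk.reverse heq'
  have hget := congrArg (fun w => SimpleGraph.Walk.getVert w 1) hrev
  simp only [SimpleGraph.Walk.reverse_copy, SimpleGraph.Walk.reverse_concat,
    SimpleGraph.Walk.getVert_copy, SimpleGraph.Walk.getVert_cons_succ,
    SimpleGraph.Walk.getVert_zero] at hget
  exact hget

lemma frank_parent_exists (hv : frank F v ≠ 0) :
    ∃ u, F.Adj u v ∧ frank F u + 1 = frank F v := by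
  obtain ⟨P, hP, hPl⟩ := exists_path_frank F v
  have hne : v ≠ froot F v := fun h => hv ((frank_eq_zero_iff F).2 h.symm)
  obtain ⟨u, hadj, w, hw⟩ := SimpleGraph.Walk.exists_eq_cons_of_ne hne P.reverse
  refine ⟨u, hadj.symm, ?_⟩
  have hroot : froot F u = froot F v := froot_eq_of_adj F hadj.symm
  have hlen : w.length + 1 = frank F v := by
    have := congrArg SimpleGraph.Walk.length hw
    rw [SimpleGraph.Walk.length_reverse, SimpleGraph.Walk.length_cons] at this
    omega
  have hle : frank F u ≤ frank F v - 1 := by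
    have := SimpleGraph.dist_le (w.reverse.copy hroot.symm rfl)
    rw [SimpleGraph.Walk.length_copy, SimpleGraph.Walk.length_reverse] at this
    unfold frank at hlen ⊢
    omega
  have hge : frank F v ≤ frank F u + 1 := by
    obtain ⟨Q, hQ, hQl⟩ := exists_path_frank F u
    have := SimpleGraph.dist_le ((Q.concat hadj.symm).copy hroot rfl)
    rwa [SimpleGraph.Walk.length_copy, SimpleGraph.Walk.length_concat, hQl] at this
  omega

lemma greedy [Fintype V] (hF : F.IsAcyclic) (p q : ℕ)
    (hp : p = Fintype.card V) (hq : q = F.edgeSet.ncard) (hq2 : 2 ≤ q)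
    (D n : ℕ) (hD : D = p * (q + 1)) (hn : n = q + 1)
    (χ : Sym2 (TW D n) → ℕ)
    (hχ : ∀ c : ℕ, {e ∈ (TG D n).edgeSet | χ e = c}.ncard ≤ p - 1) :
    ∀ (N : ℕ) (S : Finset V), S.card ≤ N →
      (∀ v ∈ S, ∀ u, F.Adj u v → frank F u < frank F v → u ∈ S) →
      ∃ φ : V → TW D n,
        Set.InjOn φ ↑S ∧
        (∀ u ∈ S, ∀ v ∈ S, F.Adj u v → (TG D n).Adj (φ u) (φ v)) ∧
        Set.InjOn (fun e => χ (e.map φ)) {e ∈ F.edgeSet | ∀ y ∈ e, y ∈ S} ∧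
        (∀ v ∈ S, (φ v).1.length = frank F v + 1) := by
  classical
  have hp1 : 1 ≤ p := by
    have hne : F.edgeSet.Nonempty := Set.nonempty_of_ncard_ne_zero (by omega)
    obtain ⟨e, he⟩ := hne
    have : 0 < Fintype.card V := Fintype.card_pos_iff.2 ⟨e.out.1⟩
    omega
  have hfinE : F.edgeSet.Finite := Set.toFinite _
  have hD0 : 0 < D := by rw [hD]; exact Nat.mul_pos hp1 (Nat.succ_pos q)
  intro N
  induction N with
  | zero =>
    intro S hcard _
    have hSempty : S = ∅ := Finset.card_eq_zero.1 (Nat.le_zero.1 hcard)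
    subst hSempty
    refine ⟨fun _ => ⟨[], by simp⟩, ?_, ?_, ?_, ?_⟩
    · simp only [Finset.coe_empty]; exact Set.injOn_empty _
    · intro u hu; simp at hu
    pick_goal 2
    · intro w hw; simp at hw
    have hempty : {e ∈ F.edgeSet | ∀ y ∈ e, y ∈ (∅ : Finset V)} = ∅ := by
      ext e
      induction e with
      | _ y z =>
        simp only [Set.mem_setOf_eq, Set.mem_empty_iff_false, iff_false, not_and]
        intro _ hall
        simpa using hall y (Sym2.mem_mk_left y z)
    rw [hempty]
    exact Set.injOn_empty _
  | succ N IH =>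
    intro S hcard hclosed
    rcases Finset.eq_empty_or_nonempty S with rfl | hS
    · exact IH ∅ (by simp) (by simp)
    obtain ⟨v, hvS, hvmax⟩ := S.exists_max_image (frank F) hS
    set S' := S.erase v with hS'def
    have hvS' : v ∉ S' := Finset.notMem_erase v S
    have hsub : S' ⊆ S := Finset.erase_subset v S
    have hcard' : S'.card ≤ N := by
      rw [hS'def, Finset.card_erase_of_mem hvS]; omega
    have hclosed' : ∀ w ∈ S', ∀ u, F.Adj u w → frank F u < frank F w → u ∈ S' := by
      intro w hw u hadj hrank
      have hwS := hsub hw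
      have huS : u ∈ S := hclosed w hwS u hadj hrank
      refine Finset.mem_erase.2 ⟨?_, huS⟩
      rintro rfl
      have := hvmax w hwS
      omega
    obtain ⟨φ', hinj', hadj', hcol', hlen'⟩ := IH S' hcard' hclosed'
    set T := S'.filter (fun u => F.Adj u v) with hTdef
    have hTmem : ∀ u ∈ T, u ∈ S' ∧ F.Adj u v := fun u hu => by
      rw [hTdef, Finset.mem_filter] at hu; exact hu
    have hTrank : ∀ u ∈ T, frank F u + 1 = frank F v := by
      intro u hu
      obtain ⟨huS', hadj⟩ := hTmem u hu
      rcases frank_adj F hF hadj with h | h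
      · exact h
      · exfalso; have := hvmax u (hsub huS'); omega
    have hTuniq : ∀ u₁ ∈ T, ∀ u₂ ∈ T, u₁ = u₂ := by
      intro u₁ h₁ u₂ h₂
      refine frank_parent_unique F hF (hTmem u₁ h₁).2 (hTmem u₂ h₂).2 ?_ ?_
      · have := hTrank u₁ h₁; omega
      · have := hTrank u₂ h₂; omega
    have hrankv : frank F v ≤ q := hq ▸ frank_le F v hfinE
    obtain ⟨x, hx_len, hx_spec⟩ :
        ∃ x : TW D n, x.1.length = frank F v ∧ ∀ u ∈ T, φ' u = x := by
      by_cases hT : T.Nonempty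
      · obtain ⟨u₀, hu₀⟩ := hT
        refine ⟨φ' u₀, ?_, ?_⟩
        · rw [hlen' u₀ (hTmem u₀ hu₀).1]
          have := hTrank u₀ hu₀; omega
        · intro u hu; rw [hTuniq u hu u₀ hu₀]
      · have hrv : frank F v = 0 := by
          by_contra h0
          obtain ⟨u, hadj, hur⟩ := frank_parent_exists F h0
          have huS : u ∈ S := hclosed v hvS u hadj (by omega)
          have huS' : u ∈ S' := Finset.mem_erase.2 ⟨by rintro rfl; omega, huS⟩
          exact hT ⟨u, by rw [hTdef, Finset.mem_filter]; exact ⟨huS', hadj⟩⟩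
        refine ⟨⟨[], by simp⟩, by simp [hrv], ?_⟩
        intro u hu; exact absurd ⟨u, hu⟩ hT
    have hxlen_le : x.1.length ≤ q := by rw [hx_len]; exact hrankv
    set node : Fin D → TW D n := fun a => ⟨a :: x.1, by simp only [List.length_cons]; omega⟩
      with hnode
    have hnode_adj : ∀ a, (TG D n).Adj x (node a) := fun a => TG_adj_of_cons a rfl
    have hnode_inj : Function.Injective node := by
      intro a b hab
      have := congrArg (fun w : TW D n => w.1) hab
      simpa [hnode] using this
    set ES' : Set (Sym2 V) := {e ∈ F.edgeSet | ∀ y ∈ e, y ∈ S'} with hES'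
    have hES'fin : ES'.Finite := Set.toFinite _
    set used : Finset ℕ := hES'fin.toFinset.image (fun e => χ (e.map φ')) with husedDef
    have hused_card : used.card ≤ q := by
      calc used.card ≤ hES'fin.toFinset.card := Finset.card_image_le
        _ = ES'.ncard := (Set.ncard_eq_toFinset_card _ hES'fin).symm
        _ ≤ F.edgeSet.ncard := Set.ncard_le_ncard (fun e he => he.1) hfinE
        _ = q := hq.symm
    set bad1 : Finset (Fin D) := Finset.univ.filter (fun a => ∃ u ∈ S', φ' u = node a)
      with hbad1def
    set bad2 : Finset (Fin D) := Finset.univ.filter (fun a => χ s(x, node a) ∈ used)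
      with hbad2def
    have hbad1 : bad1.card ≤ p - 1 := by
      haveI : Inhabited (Fin D) := ⟨⟨0, hD0⟩⟩
      have hsubim : bad1 ⊆ S'.image (fun u => (φ' u).1.headI) := by
        intro a ha
        rw [hbad1def, Finset.mem_filter] at ha
        obtain ⟨-, u, huS', hu⟩ := ha
        exact Finset.mem_image.2 ⟨u, huS', by rw [hu]; rfl⟩
      calc bad1.card ≤ _ := Finset.card_le_card hsubim
        _ ≤ S'.card := Finset.card_image_le
        _ ≤ p - 1 := by
          have h1 : S.card ≤ p := hp ▸ Finset.card_le_univ S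
          rw [hS'def, Finset.card_erase_of_mem hvS]; omega
    have hcolclass : ∀ c, (Finset.univ.filter (fun a => χ s(x, node a) = c)).card ≤ p - 1 := by
      intro c
      have hcc := hχ c
      have hccfin : {e ∈ (TG D n).edgeSet | χ e = c}.Finite := Set.toFinite _
      have hle : (Finset.univ.filter (fun a => χ s(x, node a) = c)).card ≤ hccfin.toFinset.card := by
        apply Finset.card_le_card_of_injOn (fun a => s(x, node a))
        · intro a ha
          rw [Finset.mem_coe, Finset.mem_filter] at ha
          rw [Finset.mem_coe, Set.Finite.mem_toFinset]
          exact ⟨(hnode_adj a), ha.2⟩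
        · intro a _ b _ hab
          exact hnode_inj (Sym2.congr_right.1 hab)
      rw [Set.ncard_eq_toFinset_card _ hccfin] at hcc
      omega
    have hbad2 : bad2.card ≤ q * (p - 1) := by
      have hsub2 : bad2 ⊆ used.biUnion
          (fun c => Finset.univ.filter (fun a => χ s(x, node a) = c)) := by
        intro a ha
        rw [hbad2def, Finset.mem_filter] at ha
        exact Finset.mem_biUnion.2 ⟨_, ha.2, Finset.mem_filter.2 ⟨Finset.mem_univ _, rfl⟩⟩
      calc bad2.card ≤ _ := Finset.card_le_card hsub2
        _ ≤ ∑ c ∈ used, (Finset.univ.filter (fun a => χ s(x, node a) = c)).card :=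
            Finset.card_biUnion_le
        _ ≤ used.card * (p - 1) := by
          have := Finset.sum_le_card_nsmul used _ (p - 1) (fun c _ => hcolclass c)
          simpa [smul_eq_mul] using this
        _ ≤ q * (p - 1) := Nat.mul_le_mul_right _ hused_card
    obtain ⟨a, ha⟩ : ∃ a : Fin D, a ∉ bad1 ∪ bad2 := by
      by_contra hall
      push_neg at hall
      have hsubu : Finset.univ ⊆ bad1 ∪ bad2 := fun a _ => hall a
      have hcard_le := Finset.card_le_card hsubu
      rw [Finset.card_univ, Fintype.card_fin] at hcard_le
      have hun := Finset.card_union_le bad1 bad2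
      have hkey : bad1.card + bad2.card < D := by
        have h2 : bad1.card + bad2.card ≤ (q + 1) * (p - 1) := by
          have : (p - 1) + q * (p - 1) = (q + 1) * (p - 1) := by ring
          omega
        have h3 : (q + 1) * (p - 1) < (q + 1) * p :=
          (Nat.mul_lt_mul_left (Nat.succ_pos q)).2 (Nat.sub_lt hp1 one_pos)
        calc bad1.card + bad2.card ≤ (q + 1) * (p - 1) := h2
          _ < (q + 1) * p := h3
          _ = D := by rw [hD, Nat.mul_comm]
      omega
    rw [Finset.mem_union, not_or] at ha
    have ha1 : ∀ u ∈ S', φ' u ≠ node a := by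
      intro u hu hc
      exact ha.1 (by rw [hbad1def, Finset.mem_filter]; exact ⟨Finset.mem_univ _, u, hu, hc⟩)
    have ha2 : χ s(x, node a) ∉ used := by
      intro hc
      exact ha.2 (by rw [hbad2def, Finset.mem_filter]; exact ⟨Finset.mem_univ _, hc⟩)
    set φ := Function.update φ' v (node a) with hφdef
    have hφS' : ∀ u ∈ S', φ u = φ' u := fun u hu =>
      Function.update_of_ne (by rintro rfl; exact hvS' hu) _ _
    have hφv : φ v = node a := Function.update_self _ _ _
    have hSdec : ∀ u ∈ S, u = v ∨ u ∈ S' := fun u hu => by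
      rcases eq_or_ne u v with h | h
      · exact Or.inl h
      · exact Or.inr (Finset.mem_erase.2 ⟨h, hu⟩)
    refine ⟨φ, ?_, ?_, ?_, ?_⟩
    · -- injectivity
      intro y hy z hz hyz
      simp only [Finset.mem_coe] at hy hz
      rcases hSdec y hy with rfl | hy'
      · rcases hSdec z hz with rfl | hz'
        · rfl
        · exfalso; rw [hφv, hφS' z hz'] at hyz; exact ha1 z hz' hyz.symm
      · rcases hSdec z hz with rfl | hz'
        · exfalso; rw [hφv, hφS' y hy'] at hyz; exact ha1 y hy' hyz
        · rw [hφS' y hy', hφS' z hz'] at hyz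
          exact hinj' (Finset.mem_coe.2 hy') (Finset.mem_coe.2 hz') hyz
    · -- adjacency
      intro u hu w hw hadj
      rcases hSdec u hu with rfl | hu'
      · rcases hSdec w hw with rfl | hw'
        · exact absurd hadj (F.irrefl)
        · have hwT : w ∈ T := by rw [hTdef, Finset.mem_filter]; exact ⟨hw', hadj.symm⟩
          rw [hφv, hφS' w hw', hx_spec w hwT]
          exact (hnode_adj a).symm
      · rcases hSdec w hw with rfl | hw'
        · have huT : u ∈ T := by rw [hTdef, Finset.mem_filter]; exact ⟨hu', hadj⟩
          rw [hφv, hφS' u hu', hx_spec u huT]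
          exact hnode_adj a
        · rw [hφS' u hu', hφS' w hw']
          exact hadj' u hu' w hw' hadj
    · -- colors
      have hclass : ∀ y z : V, s(y, z) ∈ F.edgeSet → (∀ w ∈ s(y, z), w ∈ S) →
          (s(y, z) ∈ ES' ∧ Sym2.map φ s(y, z) = Sym2.map φ' s(y, z)) ∨
          (∃ u ∈ T, s(y, z) = s(u, v) ∧ Sym2.map φ s(y, z) = s(x, node a)) := by
        intro y z hyzE hyzS
        have hyS : y ∈ S := hyzS y (Sym2.mem_mk_left y z)
        have hzS : z ∈ S := hyzS z (Sym2.mem_mk_right y z)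
        have hadjyz : F.Adj y z := (SimpleGraph.mem_edgeSet F).1 hyzE
        by_cases hyv : y = v
        · subst hyv
          have hzv : z ≠ y := hadjyz.ne'
          have hz' : z ∈ S' := Finset.mem_erase.2 ⟨hzv, hzS⟩
          have hzT : z ∈ T := by rw [hTdef, Finset.mem_filter]; exact ⟨hz', hadjyz.symm⟩
          right
          refine ⟨z, hzT, Sym2.eq_swap, ?_⟩
          rw [Sym2.map_pair_eq, hφv, hφS' z hz', hx_spec z hzT, Sym2.eq_swap]
        · by_cases hzv : z = v
          · subst hzv
            have hy' : y ∈ S' := Finset.mem_erase.2 ⟨hyv, hyS⟩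
            have hyT : y ∈ T := by rw [hTdef, Finset.mem_filter]; exact ⟨hy', hadjyz⟩
            right
            refine ⟨y, hyT, rfl, ?_⟩
            rw [Sym2.map_pair_eq, hφv, hφS' y hy', hx_spec y hyT]
          · left
            have hy' : y ∈ S' := Finset.mem_erase.2 ⟨hyv, hyS⟩
            have hz' : z ∈ S' := Finset.mem_erase.2 ⟨hzv, hzS⟩
            refine ⟨⟨hyzE, ?_⟩, ?_⟩
            · intro w hw
              rcases Sym2.mem_iff.1 hw with rfl | rfl
              · exact hy'
              · exact hz'
            · rw [Sym2.map_pair_eq, Sym2.map_pair_eq, hφS' y hy', hφS' z hz']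
      intro e₁ he₁ e₂ he₂ hee
      induction e₁ with
      | _ y₁ z₁ =>
        induction e₂ with
        | _ y₂ z₂ =>
          obtain ⟨hE₁, hS₁⟩ := he₁
          obtain ⟨hE₂, hS₂⟩ := he₂
          simp only at hee
          rcases hclass y₁ z₁ hE₁ hS₁ with ⟨hm₁, heq₁⟩ | ⟨u₁, hu₁T, hed₁, heq₁⟩ <;>
            rcases hclass y₂ z₂ hE₂ hS₂ with ⟨hm₂, heq₂⟩ | ⟨u₂, hu₂T, hed₂, heq₂⟩
          · rw [heq₁, heq₂] at hee
            exact hcol' hm₁ hm₂ hee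
          · exfalso
            rw [heq₁, heq₂] at hee
            apply ha2
            rw [← hee, husedDef]
            exact Finset.mem_image.2 ⟨s(y₁, z₁), hES'fin.mem_toFinset.2 hm₁, rfl⟩
          · exfalso
            rw [heq₁, heq₂] at hee
            apply ha2
            rw [hee, husedDef]
            exact Finset.mem_image.2 ⟨s(y₂, z₂), hES'fin.mem_toFinset.2 hm₂, rfl⟩
          · rw [hed₁, hed₂, hTuniq u₁ hu₁T u₂ hu₂T]
    · -- lengths
      intro w hw
      rcases hSdec w hw with rfl | hw'
      · rw [hφv]
        show (a :: x.1).length = frank F w + 1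
        rw [List.length_cons, hx_len]
      · rw [hφS' w hw']
        exact hlen' w hw'

end Aux13

open Aux13 in
/-- For every (unordered) forest `F` with `p` vertices and `q ≥ 2` edges and every `k ∈ ℕ`,
there is a forest `F'` with at most `(pq²)^{q+1}` edges that is a `(p-1)`-blow-up of `F` in
the unordered sense: every edge colouring of `F'` using each colour at most `p-1` times
admits a copy of `F` with pairwise distinct colours on its edges. -/
theorem stmt13 {V : Type*} [Fintype V] (F : SimpleGraph V) (hF : F.IsAcyclic)
    (p q : ℕ) (hp : p = Fintype.card V) (hq : q = F.edgeSet.ncard) (hq2 : 2 ≤ q)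
    (k : ℕ) :
    ∃ (m : ℕ) (F' : SimpleGraph (Fin m)),
      F'.IsAcyclic ∧ F'.edgeSet.ncard ≤ (p * q ^ 2) ^ (q + 1) ∧
      ∀ χ : Sym2 (Fin m) → ℕ,
        (∀ c : ℕ, {e ∈ F'.edgeSet | χ e = c}.ncard ≤ p - 1) →
        ∃ φ : V → Fin m, Function.Injective φ ∧
          (∀ u v : V, F.Adj u v → F'.Adj (φ u) (φ v)) ∧
          Set.InjOn (fun e => χ (e.map φ)) F.edgeSet := by
  classical
  have hp1 : 1 ≤ p := by
    have hne : F.edgeSet.Nonempty := Set.nonempty_of_ncard_ne_zero (by omega)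
    obtain ⟨ed, hed⟩ := hne
    have : 0 < Fintype.card V := Fintype.card_pos_iff.2 ⟨ed.out.1⟩
    omega
  set D : ℕ := p * (q + 1) with hD
  set n : ℕ := q + 1 with hn
  set m : ℕ := Fintype.card (TW D n) with hm
  set e : Fin m ≃ TW D n := (Fintype.equivFin (TW D n)).symm with he
  set F' : SimpleGraph (Fin m) := (TG D n).comap ⇑e with hF'
  have iso : F' ≃g TG D n := SimpleGraph.Iso.comap e (TG D n)
  refine ⟨m, F', ?_, ?_, ?_⟩
  · exact isAcyclic_of_iso iso (TG_isAcyclic D n)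
  · have h1 : F'.edgeSet.ncard = (TG D n).edgeSet.ncard := by
      rw [← Nat.card_coe_set_eq, ← Nat.card_coe_set_eq]
      exact Nat.card_congr iso.mapEdgeSet
    have h4 : D + 1 ≤ p * q ^ 2 := by
      have hqq : q + 2 ≤ q * q := by nlinarith
      have : p * (q + 1) + 1 ≤ p * q ^ 2 := by nlinarith
      omega
    calc F'.edgeSet.ncard = (TG D n).edgeSet.ncard := h1
      _ ≤ Fintype.card (TW D n) := TG_edge_ncard_le D n
      _ ≤ (D + 1) ^ n := card_TW_le D n
      _ ≤ (p * q ^ 2) ^ (q + 1) := by rw [hn]; exact Nat.pow_le_pow_left h4 _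
  · intro χ hχ
    set χ' : Sym2 (TW D n) → ℕ := fun s => χ (s.map ⇑e.symm) with hχ'def
    have hχ' : ∀ c, {ed ∈ (TG D n).edgeSet | χ' ed = c}.ncard ≤ p - 1 := by
      intro c
      refine le_trans (Set.ncard_le_ncard_of_injOn (Sym2.map ⇑e.symm) ?_ ?_ ?_) (hχ c)
      · intro ed hed
        obtain ⟨hedE, hedc⟩ := hed
        refine ⟨?_, hedc⟩
        induction ed with
        | _ w₁ w₂ =>
          rw [Sym2.map_pair_eq, SimpleGraph.mem_edgeSet]
          show (TG D n).Adj (e (e.symm w₁)) (e (e.symm w₂))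
          simp only [Equiv.apply_symm_apply]
          rwa [SimpleGraph.mem_edgeSet] at hedE
      · exact fun a _ b _ hab => Sym2.map.injective e.symm.injective hab
      · exact Set.toFinite _
    obtain ⟨ψ, hinj, hadj, hcol, -⟩ := greedy F hF p q hp hq hq2 D n hD hn χ' hχ'
      (Fintype.card V) Finset.univ (le_of_eq Finset.card_univ) (fun v _ u _ _ => Finset.mem_univ u)
    refine ⟨fun y => e.symm (ψ y), ?_, ?_, ?_⟩
    · intro y z h
      have hyz := e.symm.injective h
      exact hinj (by simp) (by simp) hyz
    · intro u v huv
      have := hadj u (Finset.mem_univ u) v (Finset.mem_univ v) huv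
      show (TG D n).Adj (e (e.symm (ψ u))) (e (e.symm (ψ v)))
      simpa using this
    · have hset : {ed ∈ F.edgeSet | ∀ y ∈ ed, y ∈ Finset.univ} = F.edgeSet := by
        ext ed; simp
      rw [hset] at hcol
      intro ed₁ h₁ ed₂ h₂ hcc
      apply hcol h₁ h₂
      simp only [hχ'def]
      rw [Sym2.map_map, Sym2.map_map]
      exact hcc
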